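/- For any odd prime K, the sum over β from -K to K-1 of exp(iπβ²/(2K)) equals the integral over all real β of exp(iπβ²/(2K)); explicitly, ∑_{β=-K}^{K-1} e^{iπβ²/(2K)} = √(2K) · e^{iπ/4}. -/

import Mathlib

open Complex Real Filter Topology

-- cpow of positive real times nonzero complex splits
lemma cpow_real_mul {r : ℝ} (hr : 0 < r) {z : ℂ} (hz : z ≠ 0) (c : ℂ) :
    ((r : ℂ) * z) ^ c = (r : ℂ) ^ c * z ^ c := by
  have hr' : (r : ℂ) ≠ 0 := by exact_mod_cast hr.ne'
  rw [Complex.cpow_def_of_ne_zero (mul_ne_zero hr' hz),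
    Complex.cpow_def_of_ne_zero hr', Complex.cpow_def_of_ne_zero hz,
    Complex.log_ofReal_mul hr hz, Complex.ofReal_log hr.le, add_mul, Complex.exp_add]

-- value of (-I)^(1/2)
lemma neg_I_cpow_half : (-I : ℂ) ^ (1/2 : ℂ) = Complex.exp (-(I * π / 4)) := by
  rw [Complex.cpow_def_of_ne_zero (by simp [Complex.I_ne_zero]), Complex.log_neg_I]
  ring_nf

-- theta periodicity by even integers
lemma theta_add_two_nat (z τ : ℂ) (k : ℕ) : jacobiTheta₂ z (τ + 2 * k) = jacobiTheta₂ z τ := by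
  induction k with
  | zero => simp
  | succ n ih =>
    have : τ + 2 * ((n : ℂ) + 1) = (τ + 2 * n) + 2 := by ring
    rw [Nat.cast_add, Nat.cast_one, this, jacobiTheta₂_add_right, ih]

-- summability of the Gaussian over ℤ
lemma summable_gauss : Summable (fun n : ℤ => rexp (-π * (n:ℝ)^2)) := by
  have h : Summable (fun n : ℤ => ‖jacobiTheta₂_term n 0 I‖) :=
    summable_norm_iff.mpr ((summable_jacobiTheta₂_term_iff 0 I).mpr (by simp))
  refine h.congr fun n => ?_
  rw [norm_jacobiTheta₂_term]
  simp

lemma theta_sub_one_bound {z τ : ℂ} (hz : z.im = 0) (hτ : 1 ≤ τ.im) :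
    ‖jacobiTheta₂ z τ - 1‖ ≤
      (rexp π * ∑' n : ℤ, rexp (-π * (n:ℝ)^2)) * rexp (-π * τ.im) := by
  have hτ0 : 0 < τ.im := lt_of_lt_of_le one_pos hτ
  have hsum := hasSum_jacobiTheta₂_term z hτ0
  have h0 : jacobiTheta₂_term 0 z τ = 1 := by
    simp [jacobiTheta₂_term]
  rw [← hsum.tsum_eq, Summable.tsum_eq_add_tsum_ite hsum.summable 0, h0, add_sub_cancel_left]
  have hb : ∀ n : ℤ, ‖(if n = 0 then 0 else jacobiTheta₂_term n z τ)‖ ≤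
      rexp π * rexp (-π * τ.im) * rexp (-π * (n:ℝ)^2) := by
    intro n
    rcases eq_or_ne n 0 with rfl | hn
    · simp; positivity
    · rw [if_neg hn, norm_jacobiTheta₂_term, hz]
      rw [← Real.exp_add, ← Real.exp_add]
      apply Real.exp_le_exp.mpr
      have h1 : (1:ℝ) ≤ (n:ℝ)^2 := by
        have h1' : (1:ℤ) ≤ n^2 := by rcases hn.lt_or_gt with h|h <;> nlinarith
        exact_mod_cast h1'
      nlinarith [Real.pi_pos.le, mul_nonneg (sub_nonneg.2 h1) (sub_nonneg.2 hτ),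
        mul_nonneg (mul_nonneg Real.pi_pos.le (sub_nonneg.2 h1)) (sub_nonneg.2 hτ)]
  have hg : HasSum (fun n : ℤ => rexp π * rexp (-π * τ.im) * rexp (-π * (n:ℝ)^2))
      (rexp π * rexp (-π * τ.im) * ∑' n : ℤ, rexp (-π * (n:ℝ)^2)) :=
    summable_gauss.hasSum.mul_left _
  calc ‖∑' n : ℤ, (if n = 0 then 0 else jacobiTheta₂_term n z τ)‖
      ≤ rexp π * rexp (-π * τ.im) * ∑' n : ℤ, rexp (-π * (n:ℝ)^2) :=
        tsum_of_norm_bounded hg hb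
    _ = (rexp π * ∑' n : ℤ, rexp (-π * (n:ℝ)^2)) * rexp (-π * τ.im) := by ring

lemma theta_tendsto_one {z : ℂ} (hz : z.im = 0) {f : ℝ → ℂ} {l : Filter ℝ}
    (hf : Tendsto (fun t => (f t).im) l atTop) :
    Tendsto (fun t => jacobiTheta₂ z (f t)) l (𝓝 1) := by
  rw [tendsto_iff_norm_sub_tendsto_zero]
  have hC : Tendsto (fun t => (rexp π * ∑' n : ℤ, rexp (-π * (n:ℝ)^2)) * rexp (-π * (f t).im))
      l (𝓝 0) := by
    have h1 : Tendsto (fun t => -π * (f t).im) l atBot := by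
      have := Tendsto.const_mul_atBot Real.pi_pos (tendsto_neg_atBot_iff.mpr hf)
      simpa [mul_neg, neg_mul] using this
    have := Real.tendsto_exp_atBot.comp h1
    simpa using this.const_mul _
  refine squeeze_zero' ?_ ?_ hC
  · filter_upwards with t using norm_nonneg _
  · filter_upwards [hf.eventually_ge_atTop 1] with t ht
    exact theta_sub_one_bound hz ht

set_option maxHeartbeats 1000000 in
lemma theta_decomp (K : ℕ) (hK : 0 < K) {t : ℝ} (ht : 0 < t) :
    jacobiTheta₂ 0 ((((2*(K:ℝ))⁻¹ : ℝ) : ℂ) + I * t) =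
    ∑ r ∈ Finset.Icc (-(K:ℤ)) ((K:ℤ)-1),
      cexp (I * π * (r:ℂ)^2 / (2*K)) * cexp (-(π * (r:ℂ)^2 * t)) *
        jacobiTheta₂ (((2*(K:ℝ)*(r:ℝ)*t : ℝ) : ℂ) * I) ((((2*(K:ℝ))^2*t : ℝ) : ℂ) * I) := by
  set τ : ℂ := (((2*(K:ℝ))⁻¹ : ℝ) : ℂ) + I * t with hτdef
  have hτ : 0 < τ.im := by simp [hτdef, ht]
  have hsum := hasSum_jacobiTheta₂_term 0 hτ
  set R := Finset.Icc (-(K:ℤ)) ((K:ℤ)-1) with hR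
  have hbij : Function.Bijective (fun p : ↥R × ℤ => (p.1 : ℤ) + 2*K*p.2) := by
    constructor
    · rintro ⟨⟨r1, h1⟩, m1⟩ ⟨⟨r2, h2⟩, m2⟩ h
      rw [hR, Finset.mem_Icc] at h1 h2
      simp only at h
      have hd : r1 - r2 = 2*(K:ℤ)*(m2 - m1) := by linear_combination h
      have hm : m1 = m2 := by
        by_contra hne
        have hab : (1:ℤ) ≤ |m2 - m1| := Int.one_le_abs (sub_ne_zero.mpr (Ne.symm hne))
        have h1' : 2*(K:ℤ) ≤ |r1 - r2| := by
          rw [hd, abs_mul, abs_of_nonneg (by positivity : (0:ℤ) ≤ 2*(K:ℤ))]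
          nlinarith
        have h2' : |r1 - r2| < 2*(K:ℤ) := by rw [abs_lt]; omega
        linarith
      rw [hm] at hd
      simp only [sub_self, mul_zero] at hd
      have : r1 = r2 := by omega
      simp [this, hm]
    · intro n
      have h2K : (0:ℤ) < 2*K := by positivity
      have h1 := Int.emod_nonneg (n+K) (by omega : (2*(K:ℤ)) ≠ 0)
      have h2 := Int.emod_lt_of_pos (n+K) h2K
      have h3 := Int.mul_ediv_add_emod (n+K) (2*K)
      refine ⟨⟨⟨(n+K) % (2*K) - K, ?_⟩, (n+K) / (2*K)⟩, ?_⟩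
      · rw [hR, Finset.mem_Icc]; omega
      · simp only; omega
  have hfe : HasSum (fun p : ↥R × ℤ => jacobiTheta₂_term ((p.1 : ℤ) + 2*K*p.2) 0 τ)
      (jacobiTheta₂ 0 τ) := ((Equiv.ofBijective _ hbij).hasSum_iff).mpr hsum
  have hfiber : ∀ r : ↥R, HasSum (fun m : ℤ => jacobiTheta₂_term ((r : ℤ) + 2*K*m) 0 τ)
      (cexp (I * π * ((r:ℤ):ℂ)^2 / (2*K)) * cexp (-(π * ((r:ℤ):ℂ)^2 * t)) *
        jacobiTheta₂ (((2*(K:ℝ)*((r:ℤ):ℝ)*t : ℝ) : ℂ) * I) ((((2*(K:ℝ))^2*t : ℝ) : ℂ) * I)) := by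
    intro r
    have hτ' : 0 < (((((2*(K:ℝ))^2*t : ℝ)) : ℂ) * I).im := by
      simp only [Complex.mul_im, Complex.ofReal_re, Complex.I_im, Complex.ofReal_im,
        Complex.I_re, mul_one, mul_zero, add_zero]
      positivity
    have h := (hasSum_jacobiTheta₂_term (((2*(K:ℝ)*((r:ℤ):ℝ)*t : ℝ) : ℂ) * I) hτ').mul_left
      (cexp (I * π * ((r:ℤ):ℂ)^2 / (2*K)) * cexp (-(π * ((r:ℤ):ℂ)^2 * t)))
    have key : ∀ m : ℤ, jacobiTheta₂_term ((r : ℤ) + 2*K*m) 0 τ =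
        cexp (I * π * ((r:ℤ):ℂ)^2 / (2*K)) * cexp (-(π * ((r:ℤ):ℂ)^2 * t)) *
          jacobiTheta₂_term m (((2*(K:ℝ)*((r:ℤ):ℝ)*t : ℝ) : ℂ) * I)
            ((((2*(K:ℝ))^2*t : ℝ) : ℂ) * I) := by
      intro m
      unfold jacobiTheta₂_term
      rw [← Complex.exp_add, ← Complex.exp_add]
      have hK0 : ((K:ℂ)) ≠ 0 := by exact_mod_cast hK.ne'
      have harg : (2*π*I*((((r:ℤ) + 2*K*m : ℤ)):ℂ)*0 + π*I*((((r:ℤ) + 2*K*m : ℤ)):ℂ)^2*τ) =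
          (I * π * ((r:ℤ):ℂ)^2 / (2*K) + -(π * ((r:ℤ):ℂ)^2 * t) +
            (2*π*I*(m:ℂ)*((((2*(K:ℝ)*((r:ℤ):ℝ)*t : ℝ)) : ℂ) * I) +
             π*I*(m:ℂ)^2*(((((2*(K:ℝ))^2*t : ℝ)) : ℂ) * I))) +
          ((m*(r:ℤ) + K*m^2 : ℤ) : ℂ) * (2*π*I) := by
        rw [hτdef]
        push_cast
        field_simp
        ring_nf
        simp only [I_sq]
        ring_nf
      rw [harg, Complex.exp_add, Complex.exp_int_mul_two_pi_mul_I, mul_one]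
    simp only [key]
    exact h
  have htot := hfe.prod_fiberwise hfiber
  have := htot.unique (hasSum_fintype _)
  rw [this]
  rw [← Finset.sum_coe_sort R]

lemma cpow_ne₀ {x : ℂ} (hx : x ≠ 0) (c : ℂ) : x ^ c ≠ 0 := by
  rw [Complex.cpow_def_of_ne_zero hx]; exact Complex.exp_ne_zero _

-- functional equation specialized at z = 0
lemma funceq_zero {τ : ℂ} : jacobiTheta₂ 0 τ = ((-I * τ) ^ (1/2 : ℂ))⁻¹ * jacobiTheta₂ 0 (-1/τ) := by
  have h := jacobiTheta₂_functional_equation 0 τ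
  simpa using h

-- functional equation at the r-th piece
lemma funceq_r (K : ℕ) (hK : 0 < K) {t : ℝ} (ht : 0 < t) (r : ℤ) :
    jacobiTheta₂ (((2*(K:ℝ)*(r:ℝ)*t : ℝ) : ℂ) * I) ((((2*(K:ℝ))^2*t : ℝ) : ℂ) * I) =
    ((((((2*(K:ℝ))^2*t : ℝ)) : ℂ)) ^ (1/2 : ℂ))⁻¹ * cexp (π * (r:ℂ)^2 * t) *
      jacobiTheta₂ ((((r:ℝ)/(2*(K:ℝ)) : ℝ) : ℂ)) (((((2*(K:ℝ))^2*t)⁻¹ : ℝ) : ℂ) * I) := by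
  have hK' : (0:ℝ) < 2*(K:ℝ) := by positivity
  have ha : (0:ℝ) < (2*(K:ℝ))^2*t := by positivity
  have ha' : ((((2*(K:ℝ))^2*t : ℝ)) : ℂ) ≠ 0 := Complex.ofReal_ne_zero.mpr ha.ne'
  have hτ' : ((((2*(K:ℝ))^2*t : ℝ)) : ℂ) * I ≠ 0 := mul_ne_zero ha' I_ne_zero
  have h := jacobiTheta₂_functional_equation
    (((2*(K:ℝ)*(r:ℝ)*t : ℝ) : ℂ) * I) ((((2*(K:ℝ))^2*t : ℝ) : ℂ) * I)
  rw [h]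
  rw [show -I * (((((2*(K:ℝ))^2*t : ℝ)) : ℂ) * I) = ((((2*(K:ℝ))^2*t : ℝ)) : ℂ) by
    push_cast; ring_nf; rw [I_sq]; ring]
  rw [show -(π:ℂ) * I * ((((2*(K:ℝ)*(r:ℝ)*t : ℝ) : ℂ) * I))^2 / ((((2*(K:ℝ))^2*t : ℝ) : ℂ) * I)
      = (π:ℂ) * (r:ℂ)^2 * t by
    have hKc : ((K:ℂ)) ≠ 0 := Nat.cast_ne_zero.mpr hK.ne'
    have htc : ((t:ℝ):ℂ) ≠ 0 := Complex.ofReal_ne_zero.mpr ht.ne'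
    push_cast
    field_simp
    simp only [Complex.I_sq]
    ring]
  rw [show (((2*(K:ℝ)*(r:ℝ)*t : ℝ) : ℂ) * I) / ((((2*(K:ℝ))^2*t : ℝ) : ℂ) * I)
      = (((r:ℝ)/(2*(K:ℝ)) : ℝ) : ℂ) by
    have hKc : ((K:ℂ)) ≠ 0 := Nat.cast_ne_zero.mpr hK.ne'
    have htc : ((t:ℝ):ℂ) ≠ 0 := Complex.ofReal_ne_zero.mpr ht.ne'
    push_cast
    field_simp]
  rw [show -1 / ((((2*(K:ℝ))^2*t : ℝ) : ℂ) * I) = ((((2*(K:ℝ))^2*t)⁻¹ : ℝ) : ℂ) * I by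
    have hKc : ((K:ℂ)) ≠ 0 := Nat.cast_ne_zero.mpr hK.ne'
    have htc : ((t:ℝ):ℂ) ≠ 0 := Complex.ofReal_ne_zero.mpr ht.ne'
    push_cast
    field_simp
    ring_nf
    simp only [Complex.inv_I, Complex.I_sq]]
  rw [one_div]


set_option maxHeartbeats 1600000 in
/-- For an odd prime `K`, the quadratic Gauss-type sum
`∑_{β=-K}^{K-1} exp(iπβ²/(2K))` equals the Fresnel integral value `√(2K)·e^{iπ/4}`. -/
theorem gauss_sum_eq_fresnel (K : ℕ) (hK : K.Prime) (hodd : Odd K) :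
    ∑ β ∈ Finset.Icc (-(K : ℤ)) ((K : ℤ) - 1),
      Complex.exp (Complex.I * π * (β : ℂ) ^ 2 / (2 * K)) =
      (Real.sqrt (2 * K) : ℂ) * Complex.exp (Complex.I * π / 4) := by
  have hK0 : 0 < K := hK.pos
  have hKr : (0:ℝ) < 2*(K:ℝ) := by positivity
  have hKc : ((K:ℂ)) ≠ 0 := Nat.cast_ne_zero.mpr hK0.ne'
  set l : Filter ℝ := 𝓝[>] (0:ℝ) with hl
  have hτne : ∀ t : ℝ, (((2*(K:ℝ))⁻¹ : ℝ) : ℂ) + I*t ≠ 0 := by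
    intro t h
    have h2 : ((((2*(K:ℝ))⁻¹ : ℝ) : ℂ) + I*t).re = 0 := by rw [h]; simp
    simp only [Complex.add_re, Complex.ofReal_re, Complex.mul_re, Complex.I_re,
      Complex.ofReal_im, Complex.I_im, Complex.ofReal_re] at h2
    have h3 : (2*(K:ℝ))⁻¹ = 0 := by linarith [h2]
    exact (by positivity : (0:ℝ) < (2*(K:ℝ))⁻¹).ne' h3
  -- pointwise identity F t = G t on t > 0
  have hFG : ∀ t ∈ Set.Ioi (0:ℝ),
      (∑ r ∈ Finset.Icc (-(K:ℤ)) ((K:ℤ)-1), cexp (I * π * (r:ℂ)^2 / (2*K)) *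
        jacobiTheta₂ ((((r:ℝ)/(2*(K:ℝ)) : ℝ) : ℂ)) (((((2*(K:ℝ))^2*t)⁻¹ : ℝ) : ℂ) * I)) =
      ((((2*(K:ℝ))^2*t : ℝ) : ℂ)) ^ (1/2 : ℂ) *
        (((-I * ((((2*(K:ℝ))⁻¹ : ℝ) : ℂ) + I*t)) ^ (1/2 : ℂ))⁻¹ *
          (((((2*(K:ℝ)*t : ℝ) : ℂ) * ((((2*(K:ℝ))⁻¹ : ℝ) : ℂ) + I*t)⁻¹) ^ (1/2 : ℂ))⁻¹ *
            jacobiTheta₂ 0 ((( -(2*(K:ℝ))⁻¹ : ℝ) : ℂ) + ((((2*(K:ℝ))^2*t)⁻¹ : ℝ) : ℂ) * I))) := by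
    intro t ht
    rw [Set.mem_Ioi] at ht
    have htc : ((t:ℝ):ℂ) ≠ 0 := Complex.ofReal_ne_zero.mpr ht.ne'
    have haR : (0:ℝ) < (2*(K:ℝ))^2*t := by positivity
    have ha' : ((((2*(K:ℝ))^2*t : ℝ)) : ℂ) ≠ 0 := Complex.ofReal_ne_zero.mpr haR.ne'
    have hDne : ((((2*(K:ℝ))^2*t : ℝ) : ℂ)) ^ (1/2 : ℂ) ≠ 0 := cpow_ne₀ ha' _
    have hτne' := hτne t
    -- decomposition side
    have hdec := theta_decomp K hK0 ht
    have hsummand : ∀ r ∈ Finset.Icc (-(K:ℤ)) ((K:ℤ)-1),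
        cexp (I * π * (r:ℂ)^2 / (2*K)) * cexp (-(π * (r:ℂ)^2 * t)) *
          jacobiTheta₂ (((2*(K:ℝ)*(r:ℝ)*t : ℝ) : ℂ) * I) ((((2*(K:ℝ))^2*t : ℝ) : ℂ) * I) =
        (((((2*(K:ℝ))^2*t : ℝ) : ℂ)) ^ (1/2 : ℂ))⁻¹ *
          (cexp (I * π * (r:ℂ)^2 / (2*K)) *
            jacobiTheta₂ ((((r:ℝ)/(2*(K:ℝ)) : ℝ) : ℂ))
              (((((2*(K:ℝ))^2*t)⁻¹ : ℝ) : ℂ) * I)) := by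
      intro r _
      rw [funceq_r K hK0 ht r]
      have h1 : cexp (-(π * (r:ℂ)^2 * t)) * cexp (π * (r:ℂ)^2 * t) = 1 := by
        rw [← Complex.exp_add]; simp
      linear_combination (cexp (I * π * (r:ℂ)^2 / (2*K)) *
        jacobiTheta₂ ((((r:ℝ)/(2*(K:ℝ)) : ℝ) : ℂ)) (((((2*(K:ℝ))^2*t)⁻¹ : ℝ) : ℂ) * I) *
        ((((((2*(K:ℝ))^2*t : ℝ) : ℂ)) ^ (1/2 : ℂ))⁻¹)) * h1
    rw [Finset.sum_congr rfl hsummand, ← Finset.mul_sum] at hdec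
    -- functional equation side
    have hσeq : -1/((((2*(K:ℝ))⁻¹ : ℝ) : ℂ) + I*t) + 2*((K:ℕ):ℂ) =
        ((2*(K:ℝ)*t : ℝ) : ℂ) * I * ((((2*(K:ℝ))⁻¹ : ℝ) : ℂ) + I*t)⁻¹ := by
      have h5 : (1 : ℂ) + ↑K * I * ↑t * 2 ≠ 0 := by
        have h6 := mul_ne_zero (mul_ne_zero (two_ne_zero (α := ℂ)) hKc) hτne'
        have h7 : (2*(K:ℂ)) * ((((2*(K:ℝ))⁻¹ : ℝ) : ℂ) + I*t) = 1 + ↑K * I * ↑t * 2 := by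
          push_cast
          field_simp
        rw [h7] at h6
        exact h6
      push_cast
      field_simp [h5]
      ring_nf
      field_simp [h5]
      ring
    have hσne : ((2*(K:ℝ)*t : ℝ) : ℂ) * I * ((((2*(K:ℝ))⁻¹ : ℝ) : ℂ) + I*t)⁻¹ ≠ 0 := by
      refine mul_ne_zero (mul_ne_zero ?_ I_ne_zero) (inv_ne_zero hτne')
      exact Complex.ofReal_ne_zero.mpr (by positivity)
    have hmIσ : -I * (((2*(K:ℝ)*t : ℝ) : ℂ) * I * ((((2*(K:ℝ))⁻¹ : ℝ) : ℂ) + I*t)⁻¹) =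
        ((2*(K:ℝ)*t : ℝ) : ℂ) * ((((2*(K:ℝ))⁻¹ : ℝ) : ℂ) + I*t)⁻¹ := by
      have h4 : -I * (((2*(K:ℝ)*t : ℝ) : ℂ) * I * ((((2*(K:ℝ))⁻¹ : ℝ) : ℂ) + I*t)⁻¹) =
          ((2*(K:ℝ)*t : ℝ) : ℂ) * ((((2*(K:ℝ))⁻¹ : ℝ) : ℂ) + I*t)⁻¹ * (-(I*I)) := by ring
      rw [h4, Complex.I_mul_I]
      ring
    have hρeq : -1/(((2*(K:ℝ)*t : ℝ) : ℂ) * I * ((((2*(K:ℝ))⁻¹ : ℝ) : ℂ) + I*t)⁻¹) =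
        ((-(2*(K:ℝ))⁻¹ : ℝ) : ℂ) + ((((2*(K:ℝ))^2*t)⁻¹ : ℝ) : ℂ) * I := by
      rw [div_eq_iff hσne]
      have hkey : ((((-(2*(K:ℝ))⁻¹ : ℝ) : ℂ) + ((((2*(K:ℝ))^2*t)⁻¹ : ℝ) : ℂ) * I)) *
          (((2*(K:ℝ)*t : ℝ) : ℂ) * I) = -((((2*(K:ℝ))⁻¹ : ℝ) : ℂ) + I*t) := by
        push_cast
        field_simp
        ring_nf
        simp only [Complex.I_sq]
        ring
      calc (-1 : ℂ) = -(((((2*(K:ℝ))⁻¹ : ℝ) : ℂ) + I*t) * ((((2*(K:ℝ))⁻¹ : ℝ) : ℂ) + I*t)⁻¹) := by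
            rw [mul_inv_cancel₀ hτne']
        _ = ((((-(2*(K:ℝ))⁻¹ : ℝ) : ℂ) + ((((2*(K:ℝ))^2*t)⁻¹ : ℝ) : ℂ) * I)) *
            (((2*(K:ℝ)*t : ℝ) : ℂ) * I * ((((2*(K:ℝ))⁻¹ : ℝ) : ℂ) + I*t)⁻¹) := by
            rw [← mul_assoc, hkey]; ring
    have hE : jacobiTheta₂ 0 ((((2*(K:ℝ))⁻¹ : ℝ) : ℂ) + I*t) =
        ((-I * ((((2*(K:ℝ))⁻¹ : ℝ) : ℂ) + I*t)) ^ (1/2 : ℂ))⁻¹ *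
        (((((2*(K:ℝ)*t : ℝ) : ℂ) * ((((2*(K:ℝ))⁻¹ : ℝ) : ℂ) + I*t)⁻¹) ^ (1/2 : ℂ))⁻¹ *
          jacobiTheta₂ 0 ((( -(2*(K:ℝ))⁻¹ : ℝ) : ℂ) + ((((2*(K:ℝ))^2*t)⁻¹ : ℝ) : ℂ) * I)) := by
      rw [funceq_zero (τ := (((2*(K:ℝ))⁻¹ : ℝ) : ℂ) + I*t),
        ← theta_add_two_nat 0 (-1/((((2*(K:ℝ))⁻¹ : ℝ) : ℂ) + I*t)) K, hσeq,
        funceq_zero (τ := ((2*(K:ℝ)*t : ℝ) : ℂ) * I * ((((2*(K:ℝ))⁻¹ : ℝ) : ℂ) + I*t)⁻¹),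
        hmIσ, hρeq, mul_assoc]
    rw [← hE, hdec, ← mul_assoc, mul_inv_cancel₀ hDne, one_mul]
  -- limit of the theta factors
  have himu : Tendsto (fun t : ℝ => ((((((2*(K:ℝ))^2*t)⁻¹ : ℝ) : ℂ) * I)).im) l atTop := by
    have him : ∀ t : ℝ, ((((((2*(K:ℝ))^2*t)⁻¹ : ℝ) : ℂ) * I)).im = ((2*(K:ℝ))^2*t)⁻¹ := by
      intro t
      simp only [Complex.mul_im, Complex.ofReal_re, Complex.ofReal_im, Complex.I_re,
        Complex.I_im, mul_one, mul_zero, zero_mul, add_zero]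
    simp only [him]
    apply tendsto_inv_nhdsGT_zero.comp
    rw [tendsto_nhdsWithin_iff]
    constructor
    · have hcont : Continuous (fun t : ℝ => (2*(K:ℝ))^2*t) := by continuity
      have := (hcont.tendsto 0).mono_left (nhdsWithin_le_nhds (s := Set.Ioi (0:ℝ)))
      simpa using this
    · filter_upwards [self_mem_nhdsWithin] with t ht
      rw [Set.mem_Ioi] at ht ⊢
      positivity
  have hFlim : Tendsto (fun t : ℝ => ∑ r ∈ Finset.Icc (-(K:ℤ)) ((K:ℤ)-1),
      cexp (I * π * (r:ℂ)^2 / (2*K)) *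
        jacobiTheta₂ ((((r:ℝ)/(2*(K:ℝ)) : ℝ) : ℂ)) (((((2*(K:ℝ))^2*t)⁻¹ : ℝ) : ℂ) * I)) l
      (𝓝 (∑ r ∈ Finset.Icc (-(K:ℤ)) ((K:ℤ)-1), cexp (I * π * (r:ℂ)^2 / (2*K)))) := by
    have h := tendsto_finset_sum (Finset.Icc (-(K:ℤ)) ((K:ℤ)-1))
      (fun r _ => ((theta_tendsto_one (Complex.ofReal_im ((r:ℝ)/(2*(K:ℝ)))) himu).const_mul
        (cexp (I * π * (r:ℂ)^2 / (2*K)))))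
    simpa using h
  have hρim : Tendsto (fun t : ℝ =>
      (((( -(2*(K:ℝ))⁻¹ : ℝ) : ℂ) + ((((2*(K:ℝ))^2*t)⁻¹ : ℝ) : ℂ) * I)).im) l atTop := by
    have him : ∀ t : ℝ, (((( -(2*(K:ℝ))⁻¹ : ℝ) : ℂ) + ((((2*(K:ℝ))^2*t)⁻¹ : ℝ) : ℂ) * I)).im =
        ((((((2*(K:ℝ))^2*t)⁻¹ : ℝ) : ℂ) * I)).im := by
      intro t; simp
    simp only [him]
    exact himu
  have hθρlim : Tendsto (fun t : ℝ => jacobiTheta₂ 0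
      ((( -(2*(K:ℝ))⁻¹ : ℝ) : ℂ) + ((((2*(K:ℝ))^2*t)⁻¹ : ℝ) : ℂ) * I)) l (𝓝 1) :=
    theta_tendsto_one rfl hρim
  -- limits of the cpow factors
  have hAlim : Tendsto (fun t : ℝ => ((-I * ((((2*(K:ℝ))⁻¹ : ℝ) : ℂ) + I*t)) ^ (1/2 : ℂ))) l
      (𝓝 ((-I * ((((2*(K:ℝ))⁻¹ : ℝ) : ℂ))) ^ (1/2 : ℂ))) := by
    have hbase : Tendsto (fun t : ℝ => -I * ((((2*(K:ℝ))⁻¹ : ℝ) : ℂ) + I*t)) l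
        (𝓝 (-I * ((((2*(K:ℝ))⁻¹ : ℝ) : ℂ)))) := by
      have hcont : Continuous (fun t : ℝ => -I * ((((2*(K:ℝ))⁻¹ : ℝ) : ℂ) + I*t)) := by
        continuity
      have := (hcont.tendsto 0).mono_left (nhdsWithin_le_nhds (s := Set.Ioi (0:ℝ)))
      simpa using this
    have hslit : (-I * ((((2*(K:ℝ))⁻¹ : ℝ) : ℂ))) ∈ Complex.slitPlane := by
      rw [Complex.mem_slitPlane_iff]
      right
      have him2 : (-I * ((((2*(K:ℝ))⁻¹ : ℝ) : ℂ))).im = -((2*(K:ℝ))⁻¹) := by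
        simp only [neg_mul, Complex.neg_im, Complex.mul_im, Complex.I_re, Complex.ofReal_re,
          Complex.I_im, Complex.ofReal_im, zero_mul, one_mul, add_zero, mul_zero, zero_add]
      rw [him2]
      exact neg_ne_zero.mpr (by positivity : (0:ℝ) < (2*(K:ℝ))⁻¹).ne'
    exact (continuousAt_cpow_const hslit).tendsto.comp hbase
  have hcinv : (((((2*(K:ℝ))⁻¹ : ℝ)) : ℂ))⁻¹ = (((2*(K:ℝ) : ℝ)) : ℂ) := by
    rw [Complex.ofReal_inv, inv_inv]
  have hYlim : Tendsto (fun t : ℝ => ((((((2*(K:ℝ))⁻¹ : ℝ) : ℂ) + I*t)⁻¹) ^ (1/2 : ℂ))) l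
      (𝓝 (((((2*(K:ℝ) : ℝ)) : ℂ)) ^ (1/2 : ℂ))) := by
    have hbase : Tendsto (fun t : ℝ => ((((2*(K:ℝ))⁻¹ : ℝ) : ℂ) + I*t)⁻¹) l
        (𝓝 ((((2*(K:ℝ) : ℝ)) : ℂ))) := by
      have hcont : Continuous (fun t : ℝ => (((2*(K:ℝ))⁻¹ : ℝ) : ℂ) + I*t) := by continuity
      have h1 := ((hcont.tendsto 0).mono_left
        (nhdsWithin_le_nhds (s := Set.Ioi (0:ℝ)))).inv₀ (by simpa using hτne 0)
      rw [show ((((2*(K:ℝ))⁻¹ : ℝ) : ℂ) + I*(0:ℝ))⁻¹ = (((2*(K:ℝ) : ℝ)) : ℂ) by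
        push_cast; rw [mul_zero, add_zero, inv_inv]] at h1
      exact h1
    have hslit : (((2*(K:ℝ) : ℝ)) : ℂ) ∈ Complex.slitPlane := by
      rw [Complex.mem_slitPlane_iff]
      left
      simpa using hKr
    exact (continuousAt_cpow_const hslit).tendsto.comp hbase
  -- nonvanishing of limit values
  have hA0ne : ((-I * ((((2*(K:ℝ))⁻¹ : ℝ) : ℂ))) ^ (1/2 : ℂ)) ≠ 0 := by
    apply cpow_ne₀
    exact mul_ne_zero (neg_ne_zero.mpr I_ne_zero)
      (Complex.ofReal_ne_zero.mpr (by positivity : (0:ℝ) < (2*(K:ℝ))⁻¹).ne')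
  have hY0ne : ((((2*(K:ℝ) : ℝ)) : ℂ)) ^ (1/2 : ℂ) ≠ 0 :=
    cpow_ne₀ (Complex.ofReal_ne_zero.mpr hKr.ne') _
  -- combined limit of the right-hand side
  have hGlim : Tendsto (fun t : ℝ =>
      ((((2*(K:ℝ) : ℝ)) : ℂ)) ^ (1/2 : ℂ) *
        ((-I * ((((2*(K:ℝ))⁻¹ : ℝ) : ℂ) + I*t)) ^ (1/2 : ℂ))⁻¹ *
        (((((((2*(K:ℝ))⁻¹ : ℝ) : ℂ) + I*t)⁻¹) ^ (1/2 : ℂ)))⁻¹ *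
        jacobiTheta₂ 0 ((( -(2*(K:ℝ))⁻¹ : ℝ) : ℂ) + ((((2*(K:ℝ))^2*t)⁻¹ : ℝ) : ℂ) * I)) l
      (𝓝 (((((2*(K:ℝ) : ℝ)) : ℂ)) ^ (1/2 : ℂ) *
        ((-I * ((((2*(K:ℝ))⁻¹ : ℝ) : ℂ))) ^ (1/2 : ℂ))⁻¹ *
        (((((2*(K:ℝ) : ℝ)) : ℂ)) ^ (1/2 : ℂ))⁻¹ * 1)) :=
    ((((tendsto_const_nhds).mul (hAlim.inv₀ hA0ne)).mul (hYlim.inv₀ hY0ne)).mul hθρlim)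
  -- identify the limit value
  have hsqrt : ((Real.sqrt (2*(K:ℝ)) : ℝ) : ℂ) = ((((2*(K:ℝ) : ℝ)) : ℂ)) ^ (1/2 : ℂ) := by
    rw [Real.sqrt_eq_rpow, Complex.ofReal_cpow hKr.le]
    norm_num
  have hprod : (((((2*(K:ℝ))⁻¹ : ℝ)) : ℂ)) ^ (1/2 : ℂ) * ((((2*(K:ℝ) : ℝ)) : ℂ)) ^ (1/2 : ℂ)
      = 1 := by
    rw [← cpow_real_mul (by positivity : (0:ℝ) < (2*(K:ℝ))⁻¹)
      (Complex.ofReal_ne_zero.mpr hKr.ne'), ← Complex.ofReal_mul,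
      inv_mul_cancel₀ hKr.ne', Complex.ofReal_one, Complex.one_cpow]
  have hA0 : ((-I * ((((2*(K:ℝ))⁻¹ : ℝ) : ℂ))) ^ (1/2 : ℂ)) =
      (((((2*(K:ℝ))⁻¹ : ℝ)) : ℂ)) ^ (1/2 : ℂ) * cexp (-(I * π / 4)) := by
    rw [show -I * ((((2*(K:ℝ))⁻¹ : ℝ) : ℂ)) = (((((2*(K:ℝ))⁻¹ : ℝ)) : ℂ)) * (-I) by ring,
      cpow_real_mul (by positivity : (0:ℝ) < (2*(K:ℝ))⁻¹) (neg_ne_zero.mpr I_ne_zero),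
      neg_I_cpow_half]
  have hval : ((((2*(K:ℝ) : ℝ)) : ℂ)) ^ (1/2 : ℂ) *
        ((-I * ((((2*(K:ℝ))⁻¹ : ℝ) : ℂ))) ^ (1/2 : ℂ))⁻¹ *
        (((((2*(K:ℝ) : ℝ)) : ℂ)) ^ (1/2 : ℂ))⁻¹ * 1 =
      ((Real.sqrt (2*(K:ℝ)) : ℝ) : ℂ) * cexp (I * π / 4) := by
    rw [hA0, mul_inv, inv_eq_of_mul_eq_one_right hprod, ← Complex.exp_neg, neg_neg, hsqrt]
    field_simp
  rw [hval] at hGlim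
  -- eventual equality of the two sides
  have hcne : ∀ t ∈ Set.Ioi (0:ℝ), ((((2*(K:ℝ)*t : ℝ)) : ℂ)) ≠ 0 := by
    intro t ht
    rw [Set.mem_Ioi] at ht
    exact Complex.ofReal_ne_zero.mpr (by positivity)
  have hGeq : ∀ t ∈ Set.Ioi (0:ℝ),
      ((((2*(K:ℝ))^2*t : ℝ) : ℂ)) ^ (1/2 : ℂ) *
        (((-I * ((((2*(K:ℝ))⁻¹ : ℝ) : ℂ) + I*t)) ^ (1/2 : ℂ))⁻¹ *
          (((((2*(K:ℝ)*t : ℝ) : ℂ) * ((((2*(K:ℝ))⁻¹ : ℝ) : ℂ) + I*t)⁻¹) ^ (1/2 : ℂ))⁻¹ *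
            jacobiTheta₂ 0 ((( -(2*(K:ℝ))⁻¹ : ℝ) : ℂ) + ((((2*(K:ℝ))^2*t)⁻¹ : ℝ) : ℂ) * I))) =
      ((((2*(K:ℝ) : ℝ)) : ℂ)) ^ (1/2 : ℂ) *
        ((-I * ((((2*(K:ℝ))⁻¹ : ℝ) : ℂ) + I*t)) ^ (1/2 : ℂ))⁻¹ *
        (((((((2*(K:ℝ))⁻¹ : ℝ) : ℂ) + I*t)⁻¹) ^ (1/2 : ℂ)))⁻¹ *
        jacobiTheta₂ 0 ((( -(2*(K:ℝ))⁻¹ : ℝ) : ℂ) + ((((2*(K:ℝ))^2*t)⁻¹ : ℝ) : ℂ) * I) := by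
    intro t ht
    have ht' := Set.mem_Ioi.mp ht
    have hXne : ((((2*(K:ℝ)*t : ℝ)) : ℂ)) ^ (1/2 : ℂ) ≠ 0 := cpow_ne₀ (hcne t ht) _
    have hD : ((((2*(K:ℝ))^2*t : ℝ) : ℂ)) ^ (1/2 : ℂ) =
        ((((2*(K:ℝ) : ℝ)) : ℂ)) ^ (1/2 : ℂ) * ((((2*(K:ℝ)*t : ℝ)) : ℂ)) ^ (1/2 : ℂ) := by
      rw [show ((((2*(K:ℝ))^2*t : ℝ)) : ℂ) = (((2*(K:ℝ) : ℝ)) : ℂ) * (((2*(K:ℝ)*t : ℝ)) : ℂ)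
        by push_cast; ring]
      exact cpow_real_mul hKr (hcne t ht) _
    have hB : ((((2*(K:ℝ)*t : ℝ) : ℂ) * ((((2*(K:ℝ))⁻¹ : ℝ) : ℂ) + I*t)⁻¹) ^ (1/2 : ℂ)) =
        ((((2*(K:ℝ)*t : ℝ)) : ℂ)) ^ (1/2 : ℂ) *
          (((((2*(K:ℝ))⁻¹ : ℝ) : ℂ) + I*t)⁻¹) ^ (1/2 : ℂ) :=
      cpow_real_mul (by positivity) (inv_ne_zero (hτne t)) _
    rw [hD, hB, mul_inv (((((2*(K:ℝ)*t : ℝ)) : ℂ)) ^ (1/2 : ℂ))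
      ((((((2*(K:ℝ))⁻¹ : ℝ) : ℂ) + I*t)⁻¹) ^ (1/2 : ℂ))]
    calc ((((2*(K:ℝ) : ℝ)) : ℂ)) ^ (1/2 : ℂ) * ((((2*(K:ℝ)*t : ℝ)) : ℂ)) ^ (1/2 : ℂ) *
          (((-I * ((((2*(K:ℝ))⁻¹ : ℝ) : ℂ) + I*t)) ^ (1/2 : ℂ))⁻¹ *
            ((((((2*(K:ℝ)*t : ℝ)) : ℂ)) ^ (1/2 : ℂ))⁻¹ *
              ((((((2*(K:ℝ))⁻¹ : ℝ) : ℂ) + I*t)⁻¹) ^ (1/2 : ℂ))⁻¹ *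
              jacobiTheta₂ 0 ((( -(2*(K:ℝ))⁻¹ : ℝ) : ℂ) + ((((2*(K:ℝ))^2*t)⁻¹ : ℝ) : ℂ) * I)))
        = (((((2*(K:ℝ)*t : ℝ)) : ℂ)) ^ (1/2 : ℂ) * (((((2*(K:ℝ)*t : ℝ)) : ℂ)) ^ (1/2 : ℂ))⁻¹) *
          (((((2*(K:ℝ) : ℝ)) : ℂ)) ^ (1/2 : ℂ) *
            ((-I * ((((2*(K:ℝ))⁻¹ : ℝ) : ℂ) + I*t)) ^ (1/2 : ℂ))⁻¹ *
            (((((((2*(K:ℝ))⁻¹ : ℝ) : ℂ) + I*t)⁻¹) ^ (1/2 : ℂ)))⁻¹ *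
            jacobiTheta₂ 0 ((( -(2*(K:ℝ))⁻¹ : ℝ) : ℂ) + ((((2*(K:ℝ))^2*t)⁻¹ : ℝ) : ℂ) * I)) := by
          ring
      _ = _ := by rw [mul_inv_cancel₀ hXne, one_mul]
  have hmem : ∀ᶠ t in l, t ∈ Set.Ioi (0:ℝ) := self_mem_nhdsWithin
  have hEq1 : (fun t : ℝ => ∑ r ∈ Finset.Icc (-(K:ℤ)) ((K:ℤ)-1),
      cexp (I * π * (r:ℂ)^2 / (2*K)) *
        jacobiTheta₂ ((((r:ℝ)/(2*(K:ℝ)) : ℝ) : ℂ)) (((((2*(K:ℝ))^2*t)⁻¹ : ℝ) : ℂ) * I)) =ᶠ[l]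
      (fun t : ℝ =>
      ((((2*(K:ℝ) : ℝ)) : ℂ)) ^ (1/2 : ℂ) *
        ((-I * ((((2*(K:ℝ))⁻¹ : ℝ) : ℂ) + I*t)) ^ (1/2 : ℂ))⁻¹ *
        (((((((2*(K:ℝ))⁻¹ : ℝ) : ℂ) + I*t)⁻¹) ^ (1/2 : ℂ)))⁻¹ *
        jacobiTheta₂ 0 ((( -(2*(K:ℝ))⁻¹ : ℝ) : ℂ) + ((((2*(K:ℝ))^2*t)⁻¹ : ℝ) : ℂ) * I)) := by
    filter_upwards [hmem] with t ht
    rw [hFG t ht, hGeq t ht]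
  have hfinal := tendsto_nhds_unique hFlim (hGlim.congr' hEq1.symm)
  rw [hfinal]
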